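/- (Sherman–Morrison–Woodbury formula for invertible tensors.) Let A be a real tensor of size n₁×n₁×n₃ invertible with inverse A⁻¹, B a tensor of size n₂×n₂×n₃ invertible with inverse B⁻¹, and U of size n₁×n₂×n₃, V of size n₂×n₁×n₃. Suppose B⁻¹ + V*A⁻¹*U is invertible with inverse W, i.e. (B⁻¹+V*A⁻¹*U)*W = W*(B⁻¹+V*A⁻¹*U) = 𝓘. Then A + U*B*V is invertible with inverse A⁻¹ − A⁻¹*U*W*V*A⁻¹, i.e. (A+U*B*V)*(A⁻¹ − A⁻¹*U*W*V*A⁻¹) = (A⁻¹ − A⁻¹*U*W*V*A⁻¹)*(A+U*B*V) = 𝓘. -/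

import Mathlib

open scoped Matrix.Norms.L2Operator

noncomputable section

/-- The t-product of third-order tensors. -/
def tProd {n₁ n₂ n₃ n₄ : ℕ} [NeZero n₃] (A : Fin n₁ → Fin n₂ → ZMod n₃ → ℝ)
    (B : Fin n₂ → Fin n₄ → ZMod n₃ → ℝ) : Fin n₁ → Fin n₄ → ZMod n₃ → ℝ :=
  fun i j k => ∑ l : Fin n₂, ∑ m : ZMod n₃, A i l (k - m) * B l j m

/-- The Frobenius norm of a third-order tensor. -/
def frobNorm {n₁ n₂ n₃ : ℕ} [NeZero n₃] (A : Fin n₁ → Fin n₂ → ZMod n₃ → ℝ) : ℝ :=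
  Real.sqrt (∑ i : Fin n₁, ∑ j : Fin n₂, ∑ k : ZMod n₃, (A i j k) ^ 2)

/-- The block circulant matrix of a third-order tensor. -/
def bcirc {n₁ n₂ n₃ : ℕ} (A : Fin n₁ → Fin n₂ → ZMod n₃ → ℝ) :
    Matrix (Fin n₁ × ZMod n₃) (Fin n₂ × ZMod n₃) ℝ :=
  fun p q => A p.1 q.1 (p.2 - q.2)

/-- The spectral norm of a third-order tensor: the L2 operator norm of its
block circulant matrix. -/
def specNorm {n₁ n₂ n₃ : ℕ} [NeZero n₃] (A : Fin n₁ → Fin n₂ → ZMod n₃ → ℝ) : ℝ :=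
  ‖bcirc A‖

/-- The identity tensor. -/
def tId (n n₃ : ℕ) : Fin n → Fin n → ZMod n₃ → ℝ :=
  fun i j k => if i = j ∧ k = 0 then 1 else 0

/-- The tensor transpose. -/
def tTrans {n₁ n₂ n₃ : ℕ} (A : Fin n₁ → Fin n₂ → ZMod n₃ → ℝ) :
    Fin n₂ → Fin n₁ → ZMod n₃ → ℝ :=
  fun i j k => A j i (-k)

/-- `X` is a Moore-Penrose inverse of `A`. -/
def IsMPInv {n₁ n₂ n₃ : ℕ} [NeZero n₃] (A : Fin n₁ → Fin n₂ → ZMod n₃ → ℝ)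
    (X : Fin n₂ → Fin n₁ → ZMod n₃ → ℝ) : Prop :=
  tProd (tProd A X) A = A ∧ tProd (tProd X A) X = X ∧
    tTrans (tProd A X) = tProd A X ∧ tTrans (tProd X A) = tProd X A

/-- The `i`-th DFT block of a third-order tensor. -/
def dftBlock {n₁ n₂ n₃ : ℕ} [NeZero n₃] (A : Fin n₁ → Fin n₂ → ZMod n₃ → ℝ) (i : ZMod n₃) :
    Matrix (Fin n₁) (Fin n₂) ℂ :=
  fun p q => ∑ k : ZMod n₃,
    Complex.exp (-2 * Real.pi * Complex.I * (i.val : ℂ) * (k.val : ℂ) / (n₃ : ℂ)) * (A p q k : ℂ)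

end

section SMWHelpers

variable {n₁ n₂ n₃ n₄ : ℕ} [NeZero n₃]

lemma bcirc_add' (A B : Fin n₁ → Fin n₂ → ZMod n₃ → ℝ) :
    bcirc (A + B) = bcirc A + bcirc B := rfl

lemma bcirc_sub' (A B : Fin n₁ → Fin n₂ → ZMod n₃ → ℝ) :
    bcirc (A - B) = bcirc A - bcirc B := rfl

lemma bcirc_tId (n : ℕ) : bcirc (tId n n₃) = (1 : Matrix (Fin n × ZMod n₃) (Fin n × ZMod n₃) ℝ) := by
  ext ⟨i, k⟩ ⟨j, k'⟩
  simp [bcirc, tId, Matrix.one_apply, Prod.ext_iff, sub_eq_zero]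

lemma bcirc_tProd (A : Fin n₁ → Fin n₂ → ZMod n₃ → ℝ) (B : Fin n₂ → Fin n₄ → ZMod n₃ → ℝ) :
    bcirc (tProd A B) = bcirc A * bcirc B := by
  ext ⟨i, k⟩ ⟨j, k'⟩
  simp only [bcirc, tProd, Matrix.mul_apply, Fintype.sum_prod_type]
  refine Finset.sum_congr rfl fun l _ => ?_
  refine Fintype.sum_equiv (Equiv.addRight k') _ _ fun m => ?_
  simp only [Equiv.coe_addRight]
  congr 2
  · ring
  · simp

lemma bcirc_inj : Function.Injective (bcirc (n₁ := n₁) (n₂ := n₂) (n₃ := n₃)) := by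
  intro A B h
  funext i j k
  have := congrFun (congrFun h (i, k)) (j, 0)
  simpa [bcirc] using this

lemma smw_mat {α β : Type*} [Fintype α] [Fintype β] [DecidableEq α] [DecidableEq β]
    (a a' : Matrix α α ℝ) (b b' : Matrix β β ℝ)
    (u : Matrix α β ℝ) (v : Matrix β α ℝ) (w : Matrix β β ℝ)
    (ha1 : a * a' = 1) (ha2 : a' * a = 1) (hb1 : b * b' = 1) (hb2 : b' * b = 1)
    (hw1 : (b' + v * a' * u) * w = 1) (hw2 : w * (b' + v * a' * u) = 1) :
    (a + u * b * v) * (a' - a' * u * w * v * a') = 1 ∧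
      (a' - a' * u * w * v * a') * (a + u * b * v) = 1 := by
  have key1 : ∀ M : Matrix β α ℝ, b * (v * (a' * (u * (w * M)))) = b * M - w * M := by
    intro M
    have h : (b' + v * a' * u) * (w * M) = M := by
      rw [← Matrix.mul_assoc, hw1, Matrix.one_mul]
    have h2 : b * ((b' + v * a' * u) * (w * M)) = b * M := by rw [h]
    rw [Matrix.add_mul, Matrix.mul_add, ← Matrix.mul_assoc b b', hb1, Matrix.one_mul] at h2
    have : b * (v * a' * u * (w * M)) = b * (v * (a' * (u * (w * M)))) := by
      simp only [Matrix.mul_assoc]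
    rw [this] at h2
    linear_combination (norm := abel) h2
  have key2 : ∀ M : Matrix β α ℝ, w * (v * (a' * (u * (b * M)))) = b * M - w * M := by
    intro M
    have h2 : w * (b' + v * a' * u) * (b * M) = b * M := by rw [hw2, Matrix.one_mul]
    rw [Matrix.mul_add, Matrix.add_mul] at h2
    have e1 : w * b' * (b * M) = w * M := by
      rw [Matrix.mul_assoc, ← Matrix.mul_assoc b' b, hb2, Matrix.one_mul]
    have e2 : w * (v * a' * u) * (b * M) = w * (v * (a' * (u * (b * M)))) := by
      simp only [Matrix.mul_assoc]
    rw [e1, e2] at h2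
    linear_combination (norm := abel) h2
  constructor
  · have h1 := key1 (v * a')
    calc (a + u * b * v) * (a' - a' * u * w * v * a')
        = a * a' - a * (a' * (u * (w * (v * a')))) +
          (u * (b * (v * a')) - u * (b * (v * (a' * (u * (w * (v * a'))))))) := by
          simp only [Matrix.add_mul, Matrix.mul_sub, Matrix.mul_assoc]; abel
      _ = 1 - u * (w * (v * a')) + (u * (b * (v * a')) - u * (b * (v * a') - w * (v * a'))) := by
          rw [ha1, h1, ← Matrix.mul_assoc a a', ha1, Matrix.one_mul]
      _ = 1 := by rw [Matrix.mul_sub]; abel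
  · have h2 := key2 v
    calc (a' - a' * u * w * v * a') * (a + u * b * v)
        = a' * a - a' * (u * (w * (v * (a' * a)))) +
          (a' * (u * (b * v)) - a' * (u * (w * (v * (a' * (u * (b * v))))))) := by
          simp only [Matrix.sub_mul, Matrix.mul_add, Matrix.mul_assoc]
      _ = 1 - a' * (u * (w * v)) + (a' * (u * (b * v)) - a' * (u * (b * v - w * v))) := by
          rw [ha2, Matrix.mul_one, h2]
      _ = 1 := by rw [Matrix.mul_sub, Matrix.mul_sub]; abel

end SMWHelpers


theorem smw_formula_invertible (n₁ n₂ n₃ : ℕ) [NeZero n₃] (hn₁ : 0 < n₁) (hn₂ : 0 < n₂)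
    (A Ainv : Fin n₁ → Fin n₁ → ZMod n₃ → ℝ)
    (B Binv : Fin n₂ → Fin n₂ → ZMod n₃ → ℝ)
    (U : Fin n₁ → Fin n₂ → ZMod n₃ → ℝ) (V : Fin n₂ → Fin n₁ → ZMod n₃ → ℝ)
    (W : Fin n₂ → Fin n₂ → ZMod n₃ → ℝ)
    (hA₁ : tProd A Ainv = tId n₁ n₃) (hA₂ : tProd Ainv A = tId n₁ n₃)
    (hB₁ : tProd B Binv = tId n₂ n₃) (hB₂ : tProd Binv B = tId n₂ n₃)
    (hW₁ : tProd (Binv + tProd (tProd V Ainv) U) W = tId n₂ n₃)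
    (hW₂ : tProd W (Binv + tProd (tProd V Ainv) U) = tId n₂ n₃) :
    tProd (A + tProd (tProd U B) V)
        (Ainv - tProd (tProd (tProd (tProd Ainv U) W) V) Ainv) = tId n₁ n₃ ∧
      tProd (Ainv - tProd (tProd (tProd (tProd Ainv U) W) V) Ainv)
        (A + tProd (tProd U B) V) = tId n₁ n₃ := by
  have tr : ∀ {m₁ m₂ : ℕ} (X Y : Fin m₁ → Fin m₂ → ZMod n₃ → ℝ),
      bcirc X = bcirc Y → X = Y := fun X Y h => bcirc_inj h
  have ha1 := congrArg bcirc hA₁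
  have ha2 := congrArg bcirc hA₂
  have hb1 := congrArg bcirc hB₁
  have hb2 := congrArg bcirc hB₂
  have hw1 := congrArg bcirc hW₁
  have hw2 := congrArg bcirc hW₂
  simp only [bcirc_tProd, bcirc_add', bcirc_tId] at ha1 ha2 hb1 hb2 hw1 hw2
  obtain ⟨g1, g2⟩ := smw_mat (bcirc A) (bcirc Ainv) (bcirc B) (bcirc Binv)
    (bcirc U) (bcirc V) (bcirc W) ha1 ha2 hb1 hb2 hw1 hw2
  constructor
  · apply tr
    simp only [bcirc_tProd, bcirc_add', bcirc_sub', bcirc_tId]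
    exact g1
  · apply tr
    simp only [bcirc_tProd, bcirc_add', bcirc_sub', bcirc_tId]
    exact g2
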